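/- Let $E$ be a 3-dimensional and $Q$ a 2-dimensional complex vector space. Consider $\widetilde{\mathcal A} = \{e^* \otimes q + f \otimes q^2 : e^* \in E^*, f \in E, q \in Q,\ \langle e^*, f\rangle = 0\} \subset (E^* \otimes Q) \oplus (E \otimes S^2Q)$. Then for $\beta = e^* \otimes q + f \otimes q^2 \in \widetilde{\mathcal A}$ with $e^*, f, q$ all nonzero, the set $T_\beta = \{e^* \otimes q' + e'^* \otimes q + f' \otimes q^2 + f \otimes (2q \circ q') : e'^* \in E^*, f' \in E, q' \in Q,\ \langle e'^*, f\rangle + \langle e^*, f'\rangle = 0\}$ is a linear subspace containing the velocity at $t=0$ of every smooth curve in $\widetilde{\mathcal A}$ through $\beta$. -/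

import Mathlib

open Module

/-- Ambient space modelling `(E* ⊗ Q) ⊕ (E ⊗ S²Q)` with `E = ℂ³`, `Q = ℂ²`. -/
abbrev AmbF := (Fin 3 → Fin 2 → ℂ) × (Fin 3 → Fin 2 → Fin 2 → ℂ)

/-- The canonical pairing `⟨e*, f⟩` in coordinates. -/
noncomputable def pairE (a b : Fin 3 → ℂ) : ℂ := ∑ i, a i * b i

/-- `e* ⊗ q`. -/
def outer (e : Fin 3 → ℂ) (q : Fin 2 → ℂ) : Fin 3 → Fin 2 → ℂ := fun i j => e i * q j

/-- `f ⊗ q²`. -/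
def cube (f : Fin 3 → ℂ) (q : Fin 2 → ℂ) : Fin 3 → Fin 2 → Fin 2 → ℂ :=
  fun i j l => f i * q j * q l

/-- `f ⊗ (2 q ∘ q')`. -/
def mixed (f : Fin 3 → ℂ) (q q' : Fin 2 → ℂ) : Fin 3 → Fin 2 → Fin 2 → ℂ :=
  fun i j l => f i * (q j * q' l + q' j * q l)

lemma pairE_add_left (a b c : Fin 3 → ℂ) : pairE (a + b) c = pairE a c + pairE b c := by
  simp [pairE, add_mul, Finset.sum_add_distrib]

lemma pairE_add_right (a b c : Fin 3 → ℂ) : pairE a (b + c) = pairE a b + pairE a c := by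
  simp [pairE, mul_add, Finset.sum_add_distrib]

lemma pairE_smul_left (c : ℂ) (a b : Fin 3 → ℂ) : pairE (c • a) b = c * pairE a b := by
  simp [pairE, Finset.mul_sum, mul_assoc]

lemma pairE_smul_right (c : ℂ) (a b : Fin 3 → ℂ) : pairE a (c • b) = c * pairE a b := by
  simp only [pairE, Pi.smul_apply, smul_eq_mul, Finset.mul_sum]
  exact Finset.sum_congr rfl fun i _ => by ring

/-- at `β = e* ⊗ q + f ⊗ q² ∈ Ã` (all of `e*`, `f`, `q` nonzero) the set
`T_β = {e* ⊗ q' + e'* ⊗ q + f' ⊗ q² + f ⊗ (2q ∘ q') : ⟨e'*, f⟩ + ⟨e*, f'⟩ = 0}` is a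
linear subspace containing the velocity at `t = 0` of every smooth curve in
`Ã = {e* ⊗ q + f ⊗ q² : ⟨e*, f⟩ = 0}` through `β`. -/
theorem tangent_space_of_F4_vmrt_cone
    (estar f : Fin 3 → ℂ) (q : Fin 2 → ℂ)
    (he : estar ≠ 0) (hf : f ≠ 0) (hq : q ≠ 0) (hef : pairE estar f = 0) :
    (∃ T : Submodule ℂ AmbF,
        (T : Set AmbF) =
          {x | ∃ (e' f' : Fin 3 → ℂ) (q' : Fin 2 → ℂ),
                pairE e' f + pairE estar f' = 0 ∧
                x = (outer estar q' + outer e' q, cube f' q + mixed f q q')}) ∧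
    (∀ (e_ f_ : ℂ → Fin 3 → ℂ) (q_ : ℂ → Fin 2 → ℂ) (γ : ℂ → AmbF) (v : AmbF),
        (∀ t, pairE (e_ t) (f_ t) = 0) →
        (∀ t, γ t = (outer (e_ t) (q_ t), cube (f_ t) (q_ t))) →
        e_ 0 = estar → f_ 0 = f → q_ 0 = q →
        DifferentiableAt ℂ e_ 0 → DifferentiableAt ℂ f_ 0 → DifferentiableAt ℂ q_ 0 →
        HasDerivAt γ v 0 →
        v ∈ {x : AmbF | ∃ (e' f' : Fin 3 → ℂ) (q' : Fin 2 → ℂ),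
                pairE e' f + pairE estar f' = 0 ∧
                x = (outer estar q' + outer e' q, cube f' q + mixed f q q')}) := by
  have hS : ∃ T : Submodule ℂ AmbF,
      (T : Set AmbF) =
        {x | ∃ (e' f' : Fin 3 → ℂ) (q' : Fin 2 → ℂ),
              pairE e' f + pairE estar f' = 0 ∧
              x = (outer estar q' + outer e' q, cube f' q + mixed f q q')} := by
    refine ⟨⟨⟨⟨{x | ∃ (e' f' : Fin 3 → ℂ) (q' : Fin 2 → ℂ),
              pairE e' f + pairE estar f' = 0 ∧
              x = (outer estar q' + outer e' q, cube f' q + mixed f q q')},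
        ?_⟩, ?_⟩, ?_⟩, rfl⟩
    · rintro a b ⟨e1, f1, q1, h1, rfl⟩ ⟨e2, f2, q2, h2, rfl⟩
      refine ⟨e1 + e2, f1 + f2, q1 + q2, ?_, ?_⟩
      · rw [pairE_add_left, pairE_add_right]; linear_combination h1 + h2
      · refine Prod.ext ?_ ?_
        · funext i j
          simp only [Prod.fst_add, Pi.add_apply, outer]
          ring
        · funext i j l
          simp only [Prod.snd_add, Pi.add_apply, cube, mixed]
          ring
    · exact ⟨0, 0, 0, by simp [pairE], by
        refine Prod.ext ?_ ?_
        · funext i j; simp [outer]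
        · funext i j l; simp [cube, mixed]⟩
    · rintro c a ⟨e1, f1, q1, h1, rfl⟩
      refine ⟨c • e1, c • f1, c • q1, ?_, ?_⟩
      · rw [pairE_smul_left, pairE_smul_right]; linear_combination c * h1
      · refine Prod.ext ?_ ?_
        · funext i j
          simp only [Prod.smul_fst, Pi.smul_apply, Pi.add_apply, smul_eq_mul, outer]
          ring
        · funext i j l
          simp only [Prod.smul_snd, Pi.smul_apply, Pi.add_apply, smul_eq_mul, cube, mixed]
          ring
  refine ⟨hS, ?_⟩
  · intro e_ f_ q_ γ v hpair hγ he0 hf0 hq0 hde hdf hdq hdv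
    set e' := deriv e_ 0 with he'
    set f' := deriv f_ 0 with hf'
    set q' := deriv q_ 0 with hq'
    have hE : HasDerivAt e_ e' 0 := hde.hasDerivAt
    have hF : HasDerivAt f_ f' 0 := hdf.hasDerivAt
    have hQ : HasDerivAt q_ q' 0 := hdq.hasDerivAt
    have hEi : ∀ i, HasDerivAt (fun t => e_ t i) (e' i) 0 := fun i => hasDerivAt_pi.mp hE i
    have hFi : ∀ i, HasDerivAt (fun t => f_ t i) (f' i) 0 := fun i => hasDerivAt_pi.mp hF i
    have hQi : ∀ j, HasDerivAt (fun t => q_ t j) (q' j) 0 := fun j => hasDerivAt_pi.mp hQ j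
    -- derivative of the explicit curve
    have h1 : HasDerivAt (fun t => outer (e_ t) (q_ t)) (outer estar q' + outer e' q) 0 := by
      rw [hasDerivAt_pi]
      intro i
      rw [hasDerivAt_pi]
      intro j
      have := (hEi i).fun_mul (hQi j)
      refine this.congr_deriv ?_
      simp [outer, he0, hq0]
      ring
    have h2 : HasDerivAt (fun t => cube (f_ t) (q_ t)) (cube f' q + mixed f q q') 0 := by
      rw [hasDerivAt_pi]
      intro i
      rw [hasDerivAt_pi]
      intro j
      rw [hasDerivAt_pi]
      intro l
      have := ((hFi i).fun_mul (hQi j)).fun_mul (hQi l)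
      refine this.congr_deriv ?_
      simp [cube, mixed, hf0, hq0]
      ring
    have hcurve : HasDerivAt γ
        (outer estar q' + outer e' q, cube f' q + mixed f q q') 0 := by
      have : γ = fun t => (outer (e_ t) (q_ t), cube (f_ t) (q_ t)) := funext hγ
      rw [this]
      exact h1.prodMk h2
    have hv : v = (outer estar q' + outer e' q, cube f' q + mixed f q q') :=
      hdv.unique hcurve
    -- the constraint
    have hc : HasDerivAt (fun t => pairE (e_ t) (f_ t))
        (pairE e' f + pairE estar f') 0 := by
      have : HasDerivAt (fun t => ∑ i, e_ t i * f_ t i)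
          (∑ i, (e' i * f_ 0 i + e_ 0 i * f' i)) 0 :=
        HasDerivAt.fun_sum fun i _ => (hEi i).fun_mul (hFi i)
      simpa [pairE, he0, hf0, Finset.sum_add_distrib] using this
    have hc0 : HasDerivAt (fun t => pairE (e_ t) (f_ t)) 0 0 := by
      have : (fun t => pairE (e_ t) (f_ t)) = fun _ => (0 : ℂ) := funext hpair
      rw [this]
      exact hasDerivAt_const 0 0
    exact ⟨e', f', q', hc.unique hc0 ▸ rfl, hv⟩
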